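/- Let φ be a parabolic automorphism of D and let ψ be any automorphism of D. If (b_n) is a sequence in D with ψ(φ^[n](b_n)) = 0 for all n ≥ 0, then (b_n) is a Blaschke sequence: ∑_{n=0}^∞ (1 − |b_n|) < ∞. -/

import Mathlib

/-- A (holomorphic) automorphism of the open unit disc `D = {z : |z| < 1}`:
a map of the form `z ↦ λ(z − a)/(1 − conj(a)·z)` with `a ∈ D` and `|λ| = 1`. -/
def IsDiscAut (φ : ℂ → ℂ) : Prop :=
  ∃ a lam : ℂ, ‖a‖ < 1 ∧ ‖lam‖ = 1 ∧
    ∀ z : ℂ, φ z = lam * (z - a) / (1 - (starRingEnd ℂ) a * z)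

/-- An elliptic automorphism: `φ ≠ id` with a fixed point in the open disc. -/
def IsEllipticAut (φ : ℂ → ℂ) : Prop :=
  IsDiscAut φ ∧ φ ≠ id ∧ ∃ a : ℂ, ‖a‖ < 1 ∧ φ a = a

/-- A parabolic automorphism: `φ ≠ id` with exactly one fixed point in the closed disc,
lying on the unit circle. -/
def IsParabolicAut (φ : ℂ → ℂ) : Prop :=
  IsDiscAut φ ∧ φ ≠ id ∧ ∃ w : ℂ, ‖w‖ = 1 ∧
    {z : ℂ | ‖z‖ ≤ 1 ∧ φ z = z} = {w}

/-- A hyperbolic automorphism: `φ ≠ id` with exactly two fixed points in the closed disc,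
both on the unit circle. -/
def IsHyperbolicAut (φ : ℂ → ℂ) : Prop :=
  IsDiscAut φ ∧ φ ≠ id ∧ ∃ w₁ w₂ : ℂ, w₁ ≠ w₂ ∧
    ‖w₁‖ = 1 ∧ ‖w₂‖ = 1 ∧
    {z : ℂ | ‖z‖ ≤ 1 ∧ φ z = z} = {w₁, w₂}

/-- The parabolic automorphism `φ_c(z) = (1 + c − 2z)/(2c − (1 + c)z)` fixing `1`. -/
noncomputable def phiC (c : ℂ) : ℂ → ℂ := fun z => (1 + c - 2 * z) / (2 * c - (1 + c) * z)

/-- The hyperbolic automorphism `ψ_r(z) = (z − r)/(1 − r z)` fixing `−1` and `1`. -/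
noncomputable def psiR (r : ℝ) : ℂ → ℂ := fun z => (z - (r : ℂ)) / (1 - (r : ℂ) * z)

private lemma denom_ne (p z : ℂ) (hp : ‖p‖ < 1) (hz : ‖z‖ ≤ 1) :
    (1 : ℂ) - (starRingEnd ℂ) p * z ≠ 0 := by
  have h : ‖(starRingEnd ℂ) p * z‖ < 1 := by
    rw [norm_mul, Complex.norm_conj]
    calc ‖p‖ * ‖z‖ ≤ ‖p‖ * 1 :=
          mul_le_mul_of_nonneg_left hz (norm_nonneg p)
      _ < 1 := by simpa using hp
  intro h0
  have h1 : (starRingEnd ℂ) p * z = 1 := by linear_combination -h0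
  rw [h1] at h; simp at h

private lemma normSq_diff (p z : ℂ) :
    Complex.normSq (1 - (starRingEnd ℂ) p * z) - Complex.normSq (z - p)
      = (1 - Complex.normSq p) * (1 - Complex.normSq z) := by
  simp only [Complex.normSq_apply, Complex.sub_re, Complex.sub_im, Complex.mul_re,
    Complex.mul_im, Complex.one_re, Complex.one_im, Complex.conj_re, Complex.conj_im]
  ring

private lemma maps_disc (p lam z : ℂ) (hp : ‖p‖ < 1) (hl : ‖lam‖ = 1)
    (hz : ‖z‖ < 1) :
    ‖lam * (z - p) / (1 - (starRingEnd ℂ) p * z)‖ < 1 := by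
  have hden := denom_ne p z hp hz.le
  rw [norm_div, norm_mul, hl, one_mul, div_lt_one (norm_pos_iff.mpr hden)]
  have key := normSq_diff p z
  have h1 : Complex.normSq p < 1 := by rw [← Complex.sq_norm]; nlinarith [norm_nonneg p]
  have h2 : Complex.normSq z < 1 := by rw [← Complex.sq_norm]; nlinarith [norm_nonneg z]
  have : (‖z - p‖)^2 < (‖1 - (starRingEnd ℂ) p * z‖)^2 := by
    rw [Complex.sq_norm, Complex.sq_norm]; nlinarith
  exact lt_of_pow_lt_pow_left₀ 2 (norm_nonneg _) this

private lemma parabolic_key (φ : ℂ → ℂ) (hφ : IsParabolicAut φ) :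
    ∃ w c : ℂ, ‖w‖ = 1 ∧ c ≠ 0 ∧ c.re = 0 ∧
      (∀ z, ‖z‖ < 1 → ‖φ z‖ < 1) ∧
      (∀ z, ‖z‖ < 1 → (w + φ z) / (w - φ z) = (w + z) / (w - z) + c) := by
  obtain ⟨⟨p, lam, hp, hl, hform⟩, hne, w, hw, hset⟩ := hφ
  have hwmem : ‖w‖ ≤ 1 ∧ φ w = w := by
    have : w ∈ ({w} : Set ℂ) := rfl
    rw [← hset] at this; exact this
  have hwfix : φ w = w := hwmem.2
  have hw0 : w ≠ 0 := by intro h; rw [h] at hw; simp at hw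
  have hdw : (1 : ℂ) - (starRingEnd ℂ) p * w ≠ 0 := denom_ne p w hp hw.le
  have hroot : lam * (w - p) = w * (1 - (starRingEnd ℂ) p * w) := by
    have h := hwfix
    rw [hform, div_eq_iff hdw] at h
    exact h
  have hp0 : p ≠ 0 := by
    intro h
    subst h
    have hlam : lam = 1 := by
      have hr := hroot
      simp only [map_zero, zero_mul, sub_zero, mul_zero] at hr
      have h2 : (lam - 1) * w = 0 := by linear_combination hr
      rcases mul_eq_zero.mp h2 with h | h
      · linear_combination h
      · exact absurd h hw0
    apply hne
    funext z
    rw [hform, hlam]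
    simp
  have hcp0 : (starRingEnd ℂ) p ≠ 0 := by simpa using hp0
  have hQw : (starRingEnd ℂ) p * w ^ 2 + (lam - 1) * w - lam * p = 0 := by
    linear_combination hroot
  -- the second root
  set w' : ℂ := -(lam * p) / ((starRingEnd ℂ) p * w) with hw'def
  have ht0 : (starRingEnd ℂ) p * w ≠ 0 := mul_ne_zero hcp0 hw0
  have hlam0 : lam ≠ 0 := by intro h; rw [h] at hl; simp at hl
  have habsw' : ‖w'‖ = 1 := by
    rw [hw'def, norm_div, norm_neg, norm_mul, norm_mul, hl, Complex.norm_conj, hw]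
    rw [one_mul, mul_one, div_self (norm_ne_zero_iff.mpr hp0)]
  have hx : w' * ((starRingEnd ℂ) p * w) = -(lam * p) := by
    rw [hw'def]; exact div_mul_cancel₀ _ ht0
  have hx2 : w' ^ 2 * ((starRingEnd ℂ) p * w) ^ 2 = (lam * p) ^ 2 := by
    rw [← mul_pow, hx]; ring
  have hQw' : (starRingEnd ℂ) p * w' ^ 2 + (lam - 1) * w' - lam * p = 0 := by
    have hmul : ((starRingEnd ℂ) p * w) ^ 2 *
        ((starRingEnd ℂ) p * w' ^ 2 + (lam - 1) * w' - lam * p) = 0 := by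
      linear_combination (starRingEnd ℂ) p * hx2 + (lam - 1) * ((starRingEnd ℂ) p * w) * hx
        - (lam * p * (starRingEnd ℂ) p) * hQw
    exact (mul_eq_zero.mp hmul).resolve_left (pow_ne_zero 2 ht0)
  have hw'fix : φ w' = w' := by
    rw [hform, div_eq_iff (denom_ne p w' hp habsw'.le)]
    linear_combination hQw'
  have hw'eq : w' = w := by
    have : w' ∈ ({w} : Set ℂ) := by rw [← hset]; exact ⟨habsw'.le, hw'fix⟩
    exact this
  have hB : lam * p = -((starRingEnd ℂ) p * w ^ 2) := by
    have h := hw'eq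
    rw [hw'def, div_eq_iff ht0] at h
    linear_combination -h
  have hA : lam = 1 - 2 * (starRingEnd ℂ) p * w := by
    have hkey : w * (2 * (starRingEnd ℂ) p * w + lam - 1) = 0 := by
      linear_combination hQw + hB
    rcases mul_eq_zero.mp hkey with h | h
    · exact absurd h hw0
    · linear_combination h
  have hww : w * (starRingEnd ℂ) w = 1 := by
    rw [Complex.mul_conj]
    norm_cast
    rw [Complex.normSq_eq_norm_sq, hw]; norm_num
  have hRe : (starRingEnd ℂ) p * w + p * (starRingEnd ℂ) w = 2 * (p * (starRingEnd ℂ) p) := by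
    have hll : lam * (starRingEnd ℂ) lam = 1 := by
      rw [Complex.mul_conj]
      norm_cast
      rw [Complex.normSq_eq_norm_sq, hl]; norm_num
    rw [hA] at hll
    simp only [map_sub, map_mul, map_one, map_ofNat, Complex.conj_conj] at hll
    linear_combination -(1/2) * hll + 2 * ((starRingEnd ℂ) p * p) * hww
  refine ⟨w, 2 * (starRingEnd ℂ) p * w / (1 - (starRingEnd ℂ) p * w), hw, ?_, ?_, ?_, ?_⟩
  · exact div_ne_zero (by exact mul_ne_zero (mul_ne_zero two_ne_zero hcp0) hw0) hdw
  · -- real part zero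
    have hdwc : (1 : ℂ) - p * (starRingEnd ℂ) w ≠ 0 := by
      intro h
      apply hdw
      have := congrArg (starRingEnd ℂ) h
      simpa using this
    have hsum : 2 * (starRingEnd ℂ) p * w / (1 - (starRingEnd ℂ) p * w)
        + (starRingEnd ℂ) (2 * (starRingEnd ℂ) p * w / (1 - (starRingEnd ℂ) p * w)) = 0 := by
      simp only [map_div₀, map_mul, map_sub, map_one, map_ofNat, Complex.conj_conj]
      rw [div_add_div _ _ hdw hdwc, div_eq_zero_iff]
      left
      linear_combination 2 * hRe - 4 * (p * (starRingEnd ℂ) p) * hww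
    have := congrArg Complex.re hsum
    rw [Complex.add_conj] at this
    norm_cast at this
    linarith
  · intro z hz
    rw [hform]
    exact maps_disc p lam z hp hl hz
  · intro z hz
    have hdz : (1 : ℂ) - (starRingEnd ℂ) p * z ≠ 0 := denom_ne p z hp hz.le
    have hwz : w - z ≠ 0 := by
      intro h
      have : w = z := by linear_combination h
      rw [this] at hw
      rw [hw] at hz
      exact lt_irrefl 1 hz
    have e1 : (w - φ z) * (1 - (starRingEnd ℂ) p * z)
        = (w - z) * (1 - (starRingEnd ℂ) p * w) := by
      rw [hform z, sub_mul, div_mul_cancel₀ _ hdz]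
      linear_combination (-z) * hA + hB
    have e2 : (w + φ z) * (1 - (starRingEnd ℂ) p * z)
        = (w + z) * (1 + (starRingEnd ℂ) p * w) - 4 * ((starRingEnd ℂ) p * w) * z := by
      rw [hform z, add_mul, div_mul_cancel₀ _ hdz]
      linear_combination z * hA - hB
    have hne1 : w - φ z ≠ 0 := by
      intro h
      rw [h, zero_mul] at e1
      exact mul_ne_zero hwz hdw e1.symm
    rw [div_add_div _ _ hwz hdw, div_eq_div_iff hne1 (mul_ne_zero hwz hdw)]
    linear_combination (-(w + φ z)) * e1 + (w - φ z) * e2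

private lemma re_div_sigma (w z : ℂ) (hw : ‖w‖ = 1) :
    ((w + z) / (w - z)).re = (1 - Complex.normSq z) / Complex.normSq (w - z) := by
  have hns : Complex.normSq w = 1 := by
    rw [Complex.normSq_eq_norm_sq, hw]; norm_num
  rw [Complex.div_re, ← add_div]
  congr 1
  simp only [Complex.add_re, Complex.add_im, Complex.sub_re, Complex.sub_im,
    Complex.normSq_apply] at *
  linarith [hns]


/-- If `φ` is parabolic, `ψ` is any disc automorphism, and `(b_n)` in `D`
satisfies `ψ(φ^[n](b_n)) = 0` for all `n`, then `(b_n)` is a Blaschke sequence. -/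
theorem stmt_16 (φ ψ : ℂ → ℂ) (hφ : IsParabolicAut φ) (hψ : IsDiscAut ψ)
    (b : ℕ → ℂ) (hb : ∀ n : ℕ, ‖b n‖ < 1)
    (hzero : ∀ n : ℕ, ψ (φ^[n] (b n)) = 0) :
    Summable (fun n : ℕ => 1 - ‖b n‖) := by
  obtain ⟨w, c, hw, hc0, hcre, hmaps, hstep⟩ := parabolic_key φ hφ
  obtain ⟨q, mu, hq, hmu, hψform⟩ := hψ
  have hiter : ∀ (n : ℕ) (z : ℂ), ‖z‖ < 1 → ‖φ^[n] z‖ < 1 := by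
    intro n
    induction n with
    | zero => intro z hz; simpa using hz
    | succ n ih =>
      intro z hz
      rw [Function.iterate_succ_apply']
      exact hmaps _ (ih z hz)
  have hfix : ∀ n, φ^[n] (b n) = q := by
    intro n
    have hu : ‖φ^[n] (b n)‖ < 1 := hiter n _ (hb n)
    have h0 := hzero n
    rw [hψform] at h0
    rcases div_eq_zero_iff.mp h0 with h | h
    · rcases mul_eq_zero.mp h with h | h
      · exact absurd h (by intro hh; rw [hh] at hmu; simp at hmu)
      · linear_combination h
    · exact absurd h (denom_ne q _ hq hu.le)
  have hsig : ∀ (n : ℕ) (z : ℂ), ‖z‖ < 1 →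
      (w + φ^[n] z) / (w - φ^[n] z) = (w + z) / (w - z) + (n : ℂ) * c := by
    intro n
    induction n with
    | zero => intro z hz; simp
    | succ n ih =>
      intro z hz
      rw [Function.iterate_succ_apply', hstep _ (hiter n z hz), ih z hz]
      push_cast
      ring
  obtain ⟨s, hsdef⟩ : ∃ s : ℂ, s = (w + q) / (w - q) := ⟨_, rfl⟩
  have hq1 : Complex.normSq q < 1 := by
    rw [Complex.normSq_eq_norm_sq]; nlinarith [norm_nonneg q]
  have hwq : w - q ≠ 0 := by
    intro h
    have hwq' : w = q := by linear_combination h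
    rw [← hwq'] at hq; rw [hw] at hq; exact lt_irrefl 1 hq
  have hsre : 0 < s.re := by
    rw [hsdef, re_div_sigma w q hw]
    exact div_pos (by linarith) (Complex.normSq_pos.mpr hwq)
  have hsbn : ∀ n : ℕ, (w + b n) / (w - b n) = s - (n : ℂ) * c := by
    intro n
    have h := hsig n (b n) (hb n)
    rw [hfix n] at h
    rw [hsdef]
    linear_combination -h
  obtain ⟨t, htdef⟩ : ∃ t : ℝ, t = c.im := ⟨_, rfl⟩
  have ht0 : t ≠ 0 := by
    intro h
    apply hc0
    rw [htdef] at h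
    apply Complex.ext <;> simp [hcre, h]
  have hwbn : ∀ n : ℕ, w - b n ≠ 0 := by
    intro n h
    have h1 : w = b n := by linear_combination h
    have h2 := hb n
    rw [← h1, hw] at h2
    exact lt_irrefl 1 h2
  have hrebn : ∀ n : ℕ, ((w + b n) / (w - b n)).re = s.re := by
    intro n
    rw [hsbn n]
    simp [Complex.sub_re, Complex.mul_re, hcre]
  have hw0 : w ≠ 0 := by
    intro h; rw [h] at hw; simp at hw
  have hnsw : Complex.normSq w = 1 := by rw [Complex.normSq_eq_norm_sq, hw]; norm_num
  -- product identity
  have hprod : ∀ n : ℕ, (s - (n : ℂ) * c + 1) * (w - b n) = 2 * w := by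
    intro n
    rw [← hsbn n, add_mul, div_mul_cancel₀ _ (hwbn n), one_mul]
    ring
  have hX : ∀ n : ℕ, Complex.normSq (s - (n : ℂ) * c + 1) * Complex.normSq (w - b n) = 4 := by
    intro n
    rw [← Complex.normSq_mul, hprod n, Complex.normSq_mul, hnsw, mul_one]
    simp [Complex.normSq_apply]
    norm_num
  have hXpos : ∀ n : ℕ, 0 < Complex.normSq (s - (n : ℂ) * c + 1) := by
    intro n
    rcases eq_or_lt_of_le (Complex.normSq_nonneg (s - (n:ℂ)*c + 1)) with h | h
    · exfalso
      have h4 := hX n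
      rw [← h, zero_mul] at h4
      norm_num at h4
    · exact h
  have hkey : ∀ n : ℕ, 1 - Complex.normSq (b n)
      = s.re * (4 / Complex.normSq (s - (n : ℂ) * c + 1)) := by
    intro n
    have h1 : 1 - Complex.normSq (b n) = s.re * Complex.normSq (w - b n) := by
      have h := re_div_sigma w (b n) hw
      rw [hrebn n] at h
      rw [h, div_mul_cancel₀ _ (Complex.normSq_pos.mpr (hwbn n)).ne']
    have h3 : Complex.normSq (w - b n) = 4 / Complex.normSq (s - (n:ℂ)*c + 1) := by
      rw [eq_div_iff (hXpos n).ne', mul_comm]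
      exact hX n
    rw [h1, h3]
  -- imaginary part
  have him : ∀ n : ℕ, (s - (n : ℂ) * c + 1).im = s.im - (n : ℝ) * t := by
    intro n
    rw [htdef]
    simp [Complex.add_im, Complex.sub_im, Complex.mul_im]
  -- choose cutoff
  obtain ⟨n₀, hn₀⟩ := exists_nat_ge ((2 * |s.im|) / |t| + 1)
  have hT : 0 < |t| := abs_pos.mpr ht0
  have habs_bound : ∀ n : ℕ, n₀ ≤ n → 1 - ‖b n‖
      ≤ (16 * s.re / t ^ 2) * (1 / (n : ℝ) ^ 2) := by
    intro n hn
    have hnn : ((2 * |s.im|) / |t| + 1) ≤ (n : ℝ) := le_trans hn₀ (by exact_mod_cast hn)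
    have hn1 : (1 : ℝ) ≤ (n : ℝ) := by
      have : 0 ≤ (2 * |s.im|) / |t| := div_nonneg (by positivity) hT.le
      linarith
    have hnt : 2 * |s.im| ≤ (n : ℝ) * |t| := by
      rw [div_add' _ _ _ hT.ne'] at hnn
      rw [div_le_iff₀ hT] at hnn
      nlinarith
    -- lower bound on normSq
    have himb : ((n : ℝ) * |t| / 2) ^ 2 ≤ Complex.normSq (s - (n : ℂ) * c + 1) := by
      have h1 : Complex.normSq (s - (n : ℂ) * c + 1) ≥ (s.im - (n : ℝ) * t) ^ 2 := by
        rw [Complex.normSq_apply, ← him n]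
        nlinarith [sq_nonneg (s - (n:ℂ)*c + 1).re, sq_nonneg (s - (n:ℂ)*c + 1).im]
      have h2 : (n : ℝ) * |t| / 2 ≤ |s.im - (n : ℝ) * t| := by
        have : |s.im - (n:ℝ)*t| ≥ (n:ℝ) * |t| - |s.im| := by
          have h3 : |(n:ℝ) * t| - |s.im| ≤ |s.im - (n:ℝ)*t| := by
            calc |(n:ℝ) * t| - |s.im| ≤ |(n:ℝ)*t - s.im| := abs_sub_abs_le_abs_sub _ _
              _ = |s.im - (n:ℝ)*t| := abs_sub_comm _ _
          rwa [abs_mul, Nat.abs_cast] at h3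
        linarith
      calc ((n : ℝ) * |t| / 2) ^ 2 ≤ |s.im - (n : ℝ) * t| ^ 2 := by
            apply sq_le_sq'
            · nlinarith [abs_nonneg (s.im - (n:ℝ)*t)]
            · exact h2
        _ = (s.im - (n : ℝ) * t) ^ 2 := sq_abs _
        _ ≤ Complex.normSq (s - (n : ℂ) * c + 1) := h1
    have hbn1 : ‖b n‖ < 1 := hb n
    have hbnn : 0 ≤ ‖b n‖ := norm_nonneg _
    have step1 : 1 - ‖b n‖ ≤ 1 - Complex.normSq (b n) := by
      rw [Complex.normSq_eq_norm_sq]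
      nlinarith
    have hpos2 : (0:ℝ) < ((n : ℝ) * |t| / 2) ^ 2 := by positivity
    have step2 : s.re * (4 / Complex.normSq (s - (n : ℂ) * c + 1))
        ≤ s.re * (4 / ((n : ℝ) * |t| / 2) ^ 2) := by
      apply mul_le_mul_of_nonneg_left _ hsre.le
      apply div_le_div_of_nonneg_left (by norm_num) hpos2 himb
    have heq : s.re * (4 / ((n : ℝ) * |t| / 2) ^ 2)
        = (16 * s.re / t ^ 2) * (1 / (n : ℝ) ^ 2) := by
      have hne : (n : ℝ) ≠ 0 := by linarith
      have hsq : ((n : ℝ) * |t| / 2) ^ 2 = (n : ℝ) ^ 2 * t ^ 2 / 4 := by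
        rw [div_pow, mul_pow, _root_.sq_abs]; norm_num
      rw [hsq]
      field_simp
      ring
    calc 1 - ‖b n‖ ≤ 1 - Complex.normSq (b n) := step1
      _ = s.re * (4 / Complex.normSq (s - (n : ℂ) * c + 1)) := hkey n
      _ ≤ s.re * (4 / ((n : ℝ) * |t| / 2) ^ 2) := step2
      _ = (16 * s.re / t ^ 2) * (1 / (n : ℝ) ^ 2) := heq
  -- summability
  have hsum : Summable (fun n : ℕ => (16 * s.re / t ^ 2) * (1 / ((n + n₀ : ℕ) : ℝ) ^ 2)) := by
    apply (summable_nat_add_iff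
      (f := fun n : ℕ => (16 * s.re / t ^ 2) * (1 / (n : ℝ) ^ 2)) n₀).mpr
    exact (Real.summable_one_div_nat_pow.mpr one_lt_two).mul_left _
  have h2 : Summable (fun n : ℕ => 1 - ‖b (n + n₀)‖) :=
    Summable.of_nonneg_of_le (fun n => by have := hb (n + n₀); linarith)
      (fun n => habs_bound (n + n₀) (Nat.le_add_left _ _)) hsum
  exact (summable_nat_add_iff n₀).mp h2
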